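/- For every integer n ≥ 1 and every nonnegative integer r, ∑_{i=0}^{r} (−1)^{r−i}·C(r,i)·∑_{j=0}^{∞} φ̃_{n,j+i}/2^{j+1} = r!·w̃_{n,r}, where each inner series converges. In particular (r = 0), ∑_{j=0}^{∞} φ̃_{n,j}/2^{j+1} = w̃_n. -/

import Mathlib

/-- Stirling numbers of the second kind. -/
def stirling2 : ℕ → ℕ → ℕ
  | 0, 0 => 1
  | 0, _ + 1 => 0
  | _ + 1, 0 => 0
  | n + 1, k + 1 => (k + 1) * stirling2 n (k + 1) + stirling2 n k

/-- Derangement numbers `d_n = n! ∑_{i=0}^n (-1)^i / i!`. -/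
noncomputable def derang (n : ℕ) : ℝ :=
  (n.factorial : ℝ) * ∑ i ∈ Finset.range (n + 1), (-1 : ℝ) ^ i / (i.factorial : ℝ)

/-- Partial derangement numbers `d_{n,r}`. -/
noncomputable def pderang (n r : ℕ) : ℝ :=
  if r ≤ n then (n.choose r : ℝ) * derang (n - r) else 0

/-- Partial deranged Bell numbers `w̃_{n,r}`. -/
noncomputable def pdb (n r : ℕ) : ℝ :=
  ∑ k ∈ Finset.range (n + 1), (stirling2 n k : ℝ) * pderang k r

/-- Complementary Bell numbers `φ̃_n = ∑_{k=0}^n (-1)^k {n brace k}`. -/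
def cbell (n : ℕ) : ℝ :=
  ∑ k ∈ Finset.range (n + 1), (-1 : ℝ) ^ k * (stirling2 n k : ℝ)

/-- Complementary `r`-Bell numbers `φ̃_{n,r} = ∑_{k=0}^n C(n,k) r^k φ̃_{n-k}`. -/
def cbellR (n r : ℕ) : ℝ :=
  ∑ k ∈ Finset.range (n + 1), (n.choose k : ℝ) * (r : ℝ) ^ k * cbell (n - k)

open Finset

lemma stirling2_succ_zero (n : ℕ) : stirling2 (n+1) 0 = 0 := rfl
lemma stirling2_zero_succ (k : ℕ) : stirling2 0 (k+1) = 0 := rfl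
lemma stirling2_succ_succ (n k : ℕ) :
    stirling2 (n+1) (k+1) = (k + 1) * stirling2 n (k + 1) + stirling2 n k := rfl

lemma stirling2_eq_zero_of_lt : ∀ {n k : ℕ}, n < k → stirling2 n k = 0
  | 0, 0, h => absurd h (by omega)
  | 0, k+1, _ => rfl
  | n+1, 0, h => absurd h (by omega)
  | n+1, k+1, h => by
      rw [stirling2_succ_succ, stirling2_eq_zero_of_lt (by omega),
        stirling2_eq_zero_of_lt (by omega)]
      simp

lemma stirling2_one : ∀ n : ℕ, stirling2 (n+1) 1 = 1
  | 0 => rfl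
  | n+1 => by
      rw [stirling2_succ_succ, stirling2_one n, stirling2_succ_zero]

lemma stirling2_succ_sum (n k : ℕ) :
    stirling2 (n+1) (k+1) = ∑ j ∈ range (n+1), n.choose j * stirling2 j k := by
  induction n generalizing k with
  | zero => cases k <;> simp [stirling2]
  | succ n ih =>
    rw [Finset.sum_range_succ']
    have h0 : (n+1).choose 0 * stirling2 0 k = stirling2 0 k := by simp
    rw [h0]
    cases k with
    | zero =>
      have : ∀ j ∈ range (n+1), (n+1).choose (j+1) * stirling2 (j+1) 0 = 0 := by
        intro j _; simp [stirling2_succ_zero]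
      rw [Finset.sum_congr rfl this, stirling2_one]
      simp [stirling2]
    | succ k =>
      have hzero : stirling2 0 (k+1) = 0 := rfl
      rw [hzero, add_zero]
      have hsplit : ∀ j ∈ range (n+1),
          (n+1).choose (j+1) * stirling2 (j+1) (k+1)
            = (n.choose j * ((k+1) * stirling2 j (k+1)) + n.choose j * stirling2 j k)
              + n.choose (j+1) * stirling2 (j+1) (k+1) := by
        intro j _
        rw [Nat.choose_succ_succ, stirling2_succ_succ]
        ring
      rw [Finset.sum_congr rfl hsplit, Finset.sum_add_distrib, Finset.sum_add_distrib]
      have h3 : ∑ j ∈ range (n+1), n.choose (j+1) * stirling2 (j+1) (k+1)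
          = ∑ j ∈ range (n+1), n.choose j * stirling2 j (k+1) := by
        rw [Finset.sum_range_succ,
          Finset.sum_range_succ' (fun j => n.choose j * stirling2 j (k+1)) n]
        simp [Nat.choose_succ_self, stirling2_zero_succ]
      have h4 : ∑ x ∈ range (n+1), n.choose x * ((k+1) * stirling2 x (k+1))
          = (k+1) * ∑ x ∈ range (n+1), n.choose x * stirling2 x (k+1) := by
        rw [Finset.mul_sum]; exact Finset.sum_congr rfl (fun x _ => by ring)
      rw [h3, h4, ← ih (k+1), ← ih k]
      rw [stirling2_succ_succ (n+1) (k+1)]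
      ring

lemma cbell_succ (n : ℕ) :
    cbell (n+1) = -∑ j ∈ range (n+1), (n.choose j : ℝ) * cbell j := by
  have hinner : ∀ j ∈ range (n+1), (n.choose j : ℝ) * cbell j
      = ∑ k ∈ range (n+1), (n.choose j : ℝ) * ((-1:ℝ)^k * (stirling2 j k : ℝ)) := by
    intro j hj
    rw [← Finset.mul_sum]
    congr 1
    apply Finset.sum_subset
      (Finset.range_subset_range.2 (by simp only [Finset.mem_range] at hj; omega))
    intro k _ hk
    simp only [Finset.mem_range, not_lt] at hk
    have hjk : j < k := by simp only [Finset.mem_range] at hj; omega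
    rw [stirling2_eq_zero_of_lt hjk]
    simp
  rw [Finset.sum_congr rfl hinner, Finset.sum_comm, cbell, Finset.sum_range_succ']
  have h0 : ((-1:ℝ))^0 * ((stirling2 (n+1) 0 : ℕ) : ℝ) = 0 := by
    rw [stirling2_succ_zero]; simp
  rw [h0, add_zero, ← Finset.sum_neg_distrib]
  apply Finset.sum_congr rfl
  intro k _
  rw [stirling2_succ_sum]
  push_cast
  rw [Finset.mul_sum, ← Finset.sum_neg_distrib]
  apply Finset.sum_congr rfl
  intro j _
  ring

lemma sum_choose_cbell (s : ℕ) :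
    ∑ j ∈ range (s+1), (s.choose j : ℝ) * cbell (s - j) = -cbell (s+1) := by
  rw [cbell_succ, neg_neg]
  rw [← Finset.sum_range_reflect (fun j => (s.choose j : ℝ) * cbell j) (s+1)]
  apply Finset.sum_congr rfl
  intro j hj
  simp only [Finset.mem_range] at hj
  have hj' : j ≤ s := by omega
  have : s + 1 - 1 - j = s - j := by omega
  rw [this, Nat.choose_symm hj']

lemma cbellR_shift (n m : ℕ) :
    cbellR n (m+1) = -∑ a ∈ range (n+1), (n.choose a : ℝ) * (m:ℝ)^a * cbell (n - a + 1) := by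
  rw [cbellR]
  have hexp : ∀ k ∈ range (n+1), (n.choose k : ℝ) * ((m+1 : ℕ) : ℝ)^k * cbell (n - k)
      = ∑ a ∈ range (n+1), ((n.choose k : ℝ) * (k.choose a : ℝ) * (m:ℝ)^a) * cbell (n - k) := by
    intro k hk
    simp only [Finset.mem_range] at hk
    have : ((m+1 : ℕ) : ℝ)^k = ∑ a ∈ range (k+1), (m:ℝ)^a * 1^(k-a) * (k.choose a : ℝ) := by
      push_cast
      exact add_pow (m:ℝ) 1 k
    rw [this]
    have hext : ∑ a ∈ range (k+1), (m:ℝ)^a * 1^(k-a) * (k.choose a : ℝ)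
        = ∑ a ∈ range (n+1), (m:ℝ)^a * 1^(k-a) * (k.choose a : ℝ) := by
      apply Finset.sum_subset (Finset.range_subset_range.2 (by omega))
      intro a _ ha
      simp only [Finset.mem_range, not_lt] at ha
      rw [Nat.choose_eq_zero_of_lt (by omega)]
      simp
    rw [hext, Finset.mul_sum, Finset.sum_mul]
    apply Finset.sum_congr rfl
    intro a _
    ring
  rw [Finset.sum_congr rfl hexp, Finset.sum_comm]
  rw [← Finset.sum_neg_distrib]
  apply Finset.sum_congr rfl
  intro a ha
  simp only [Finset.mem_range] at ha
  have ha' : a ≤ n := by omega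
  -- inner sum over k
  rw [Finset.range_eq_Ico, ← Finset.sum_Ico_consecutive _ (Nat.zero_le a) (by omega : a ≤ n+1)]
  have hz : ∑ k ∈ Finset.Ico 0 a, ((n.choose k : ℝ) * (k.choose a : ℝ) * (m:ℝ)^a) * cbell (n - k) = 0 := by
    apply Finset.sum_eq_zero
    intro k hk
    simp only [Finset.mem_Ico] at hk
    rw [Nat.choose_eq_zero_of_lt (by omega : k < a)]
    simp
  rw [hz, zero_add, Finset.sum_Ico_eq_sum_range]
  have hra : n + 1 - a = (n - a) + 1 := by omega
  rw [hra]
  have hterm : ∀ j ∈ range ((n-a)+1),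
      ((n.choose (a+j) : ℝ) * ((a+j).choose a : ℝ) * (m:ℝ)^a) * cbell (n - (a+j))
      = ((n.choose a : ℝ) * (m:ℝ)^a) * (((n-a).choose j : ℝ) * cbell ((n-a) - j)) := by
    intro j hj
    simp only [Finset.mem_range] at hj
    have h1 : n.choose (a+j) * (a+j).choose a = n.choose a * (n-a).choose j := by
      have := Nat.choose_mul (n := n) (k := a+j) (s := a) (by omega)
      simpa using this
    have h2 : n - (a+j) = (n-a) - j := by omega
    rw [h2]
    have h1' : (n.choose (a+j) : ℝ) * ((a+j).choose a : ℝ) = (n.choose a : ℝ) * ((n-a).choose j : ℝ) := by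
      exact_mod_cast congrArg (Nat.cast : ℕ → ℝ) h1
    linear_combination ((m:ℝ)^a * cbell ((n-a) - j)) * h1'
  rw [Finset.sum_congr rfl hterm, ← Finset.mul_sum, sum_choose_cbell]
  ring

lemma cbellR_succ (n m : ℕ) : cbellR (n+1) m = m * cbellR n m - cbellR n (m+1) := by
  rw [cbellR_shift, cbellR, cbellR, Finset.sum_range_succ']
  have h0 : ((n+1).choose 0 : ℝ) * (m:ℝ)^0 * cbell (n+1-0) = cbell (n+1) := by simp
  rw [h0]
  have hterm : ∀ k ∈ range (n+1),
      ((n+1).choose (k+1) : ℝ) * (m:ℝ)^(k+1) * cbell (n+1-(k+1))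
      = (n.choose k : ℝ) * (m:ℝ)^(k+1) * cbell (n-k)
        + (n.choose (k+1) : ℝ) * (m:ℝ)^(k+1) * cbell (n-k) := by
    intro k _
    have : (n+1).choose (k+1) = n.choose k + n.choose (k+1) := Nat.choose_succ_succ n k
    have h2 : n + 1 - (k+1) = n - k := by omega
    rw [this, h2]
    push_cast
    ring
  rw [Finset.sum_congr rfl hterm, Finset.sum_add_distrib]
  have hb : ∑ k ∈ range (n+1), (n.choose (k+1) : ℝ) * (m:ℝ)^(k+1) * cbell (n-k) + cbell (n+1)
      = ∑ a ∈ range (n+1), (n.choose a : ℝ) * (m:ℝ)^a * cbell (n - a + 1) := by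
    rw [Finset.sum_range_succ' (fun a => (n.choose a : ℝ) * (m:ℝ)^a * cbell (n - a + 1)) n]
    have hc : (n.choose 0 : ℝ) * (m:ℝ)^0 * cbell (n - 0 + 1) = cbell (n+1) := by simp
    rw [hc]
    congr 1
    rw [Finset.sum_range_succ]
    have hlast : (n.choose (n+1) : ℝ) * (m:ℝ)^(n+1) * cbell (n-n) = 0 := by
      rw [Nat.choose_succ_self]; simp
    rw [hlast, add_zero]
    apply Finset.sum_congr rfl
    intro k hk
    simp only [Finset.mem_range] at hk
    have : n - (k+1) + 1 = n - k := by omega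
    rw [this]
  rw [← hb]
  have hm : (m:ℝ) * ∑ k ∈ range (n+1), (n.choose k : ℝ) * (m:ℝ)^k * cbell (n-k)
      = ∑ k ∈ range (n+1), (n.choose k : ℝ) * (m:ℝ)^(k+1) * cbell (n-k) := by
    rw [Finset.mul_sum]
    apply Finset.sum_congr rfl
    intro k _
    ring
  rw [hm]
  ring

noncomputable def D (n k : ℕ) : ℝ :=
  ∑ t ∈ range (n+1), (-1:ℝ)^t * (t.choose k : ℝ) * (stirling2 n t : ℝ)

noncomputable def cc (n k : ℕ) : ℝ := (-1:ℝ)^k * (k.factorial : ℝ) * D n k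

lemma D_eq_zero_of_lt {n k : ℕ} (h : n < k) : D n k = 0 := by
  apply Finset.sum_eq_zero
  intro t ht
  simp only [Finset.mem_range] at ht
  rw [Nat.choose_eq_zero_of_lt (by omega : t < k)]
  simp

lemma cc_eq_zero_of_lt {n k : ℕ} (h : n < k) : cc n k = 0 := by
  rw [cc, D_eq_zero_of_lt h, mul_zero]

lemma mul_choose_aux (u k : ℕ) : u * u.choose k = k * u.choose k + (k+1) * u.choose (k+1) := by
  rcases le_or_gt k u with h | h
  · have h2 : u.choose (k+1) * (k+1) = u.choose k * (u - k) := Nat.choose_succ_right_eq u k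
    have h3 : k + (u - k) = u := by omega
    calc u * u.choose k = u.choose k * (k + (u - k)) := by rw [h3, mul_comm]
    _ = u.choose k * k + u.choose k * (u - k) := Nat.mul_add _ _ _
    _ = k * u.choose k + (k+1) * u.choose (k+1) := by rw [← h2, mul_comm (u.choose k) k,
        mul_comm (u.choose (k+1)) (k+1)]
  · rw [Nat.choose_eq_zero_of_lt h, Nat.choose_eq_zero_of_lt (by omega)]
    simp

lemma mul_choose_aux' (u k : ℕ) :
    (u:ℝ) * (u.choose k : ℝ) = (k:ℝ) * (u.choose k : ℝ) + ((k:ℝ)+1) * (u.choose (k+1) : ℝ) := by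
  have := mul_choose_aux u k
  exact_mod_cast congrArg (Nat.cast : ℕ → ℝ) this

lemma D_succ_aux (n k : ℕ) :
    D (n+1) k = (∑ t ∈ range (n+1), (-1:ℝ)^t * ((t:ℝ) * (t.choose k : ℝ)) * (stirling2 n t : ℝ))
      - ∑ t ∈ range (n+1), (-1:ℝ)^t * ((t+1).choose k : ℝ) * (stirling2 n t : ℝ) := by
  rw [D, Finset.sum_range_succ']
  have h0 : (-1:ℝ)^0 * ((Nat.choose 0 k : ℕ) : ℝ) * ((stirling2 (n+1) 0 : ℕ) : ℝ) = 0 := by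
    rw [stirling2_succ_zero]; simp
  rw [h0, add_zero]
  have hterm : ∀ t ∈ range (n+1),
      (-1:ℝ)^(t+1) * ((t+1).choose k : ℝ) * ((stirling2 (n+1) (t+1) : ℕ) : ℝ)
      = ((-1:ℝ)^(t+1) * (((t:ℝ)+1) * ((t+1).choose k : ℝ)) * (stirling2 n (t+1) : ℝ))
        + (-((-1:ℝ)^t * ((t+1).choose k : ℝ) * (stirling2 n t : ℝ))) := by
    intro t _
    rw [stirling2_succ_succ]
    push_cast
    ring
  rw [Finset.sum_congr rfl hterm, Finset.sum_add_distrib]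
  have hshift : ∑ t ∈ range (n+1),
      (-1:ℝ)^(t+1) * (((t:ℝ)+1) * ((t+1).choose k : ℝ)) * (stirling2 n (t+1) : ℝ)
      = ∑ t ∈ range (n+1), (-1:ℝ)^t * ((t:ℝ) * (t.choose k : ℝ)) * (stirling2 n t : ℝ) := by
    rw [Finset.sum_range_succ' (fun t => (-1:ℝ)^t * ((t:ℝ) * (t.choose k : ℝ)) * (stirling2 n t : ℝ)) n]
    push_cast
    rw [Finset.sum_range_succ]
    rw [stirling2_eq_zero_of_lt (by omega : n < n+1)]
    simp
  rw [hshift, Finset.sum_neg_distrib]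
  ring
lemma D_succ_zero (n : ℕ) : D (n+1) 0 = D n 1 - D n 0 := by
  rw [D_succ_aux]
  have h1 : ∑ t ∈ range (n+1), (-1:ℝ)^t * ((t:ℝ) * (t.choose 0 : ℝ)) * (stirling2 n t : ℝ) = D n 1 := by
    apply Finset.sum_congr rfl
    intro t _
    rw [Nat.choose_zero_right, Nat.choose_one_right]
    push_cast; ring
  have h2 : ∑ t ∈ range (n+1), (-1:ℝ)^t * ((t+1).choose 0 : ℝ) * (stirling2 n t : ℝ) = D n 0 := by
    apply Finset.sum_congr rfl
    intro t _
    rw [Nat.choose_zero_right, Nat.choose_zero_right]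
  rw [h1, h2]

lemma D_succ (n k : ℕ) :
    D (n+1) (k+1) = (k:ℝ) * D n (k+1) + ((k:ℝ)+2) * D n (k+2) - D n k := by
  rw [D_succ_aux]
  have h1 : ∑ t ∈ range (n+1), (-1:ℝ)^t * ((t:ℝ) * (t.choose (k+1) : ℝ)) * (stirling2 n t : ℝ)
      = ((k:ℝ)+1) * D n (k+1) + ((k:ℝ)+2) * D n (k+2) := by
    rw [D, D, Finset.mul_sum, Finset.mul_sum, ← Finset.sum_add_distrib]
    apply Finset.sum_congr rfl
    intro t _
    rw [mul_choose_aux' t (k+1)]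
    push_cast
    ring
  have h2 : ∑ t ∈ range (n+1), (-1:ℝ)^t * ((t+1).choose (k+1) : ℝ) * (stirling2 n t : ℝ)
      = D n k + D n (k+1) := by
    rw [D, D, ← Finset.sum_add_distrib]
    apply Finset.sum_congr rfl
    intro t _
    rw [Nat.choose_succ_succ t k]
    push_cast
    ring
  rw [h1, h2]
  ring

lemma cc_succ (n k : ℕ) :
    cc (n+1) k = (k:ℝ) * cc n (k-1) + ((k:ℝ)-1) * cc n k - cc n (k+1) := by
  cases k with
  | zero =>
    simp only [cc, Nat.cast_zero, pow_zero, Nat.factorial_zero, Nat.cast_one, zero_mul]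
    rw [D_succ_zero]
    simp [Nat.factorial]
    ring
  | succ k =>
    simp only [cc, Nat.add_sub_cancel]
    rw [D_succ]
    have hf1 : ((k+1).factorial : ℝ) = ((k:ℝ)+1) * (k.factorial : ℝ) := by
      rw [Nat.factorial_succ]; push_cast; ring
    have hf2 : ((k+2).factorial : ℝ) = ((k:ℝ)+2) * ((k:ℝ)+1) * (k.factorial : ℝ) := by
      rw [Nat.factorial_succ, Nat.factorial_succ]; push_cast; ring
    rw [hf1, hf2]
    push_cast
    rw [pow_succ, pow_succ]
    ring

lemma cbellR_eq (n : ℕ) : ∀ m : ℕ, cbellR n m = ∑ k ∈ range (n+1), (m.choose k : ℝ) * cc n k := by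
  induction n with
  | zero =>
    intro m
    simp [cbellR, cbell, cc, D, stirling2]
  | succ n ih =>
    intro m
    rw [cbellR_succ, ih m, ih (m+1)]
    have hR : ∑ k ∈ range (n+2), (m.choose k : ℝ) * cc (n+1) k
        = (∑ k ∈ range (n+1), ((k:ℝ)+1) * ((m.choose (k+1) : ℕ) : ℝ) * cc n k)
          + (∑ k ∈ range (n+1), ((k:ℝ)-1) * (m.choose k : ℝ) * cc n k)
          - ∑ k ∈ range (n+1), (m.choose k : ℝ) * cc n (k+1) := by
      have hterm : ∀ k ∈ range (n+2), (m.choose k : ℝ) * cc (n+1) k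
          = ((k:ℝ) * (m.choose k : ℝ) * cc n (k-1))
            + (((k:ℝ)-1) * (m.choose k : ℝ) * cc n k)
            - ((m.choose k : ℝ) * cc n (k+1)) := by
        intro k _
        rw [cc_succ]
        ring
      rw [Finset.sum_congr rfl hterm]
      rw [Finset.sum_sub_distrib, Finset.sum_add_distrib]
      congr 1
      congr 1
      · -- R1
        rw [Finset.sum_range_succ' (fun k => (k:ℝ) * (m.choose k : ℝ) * cc n (k-1)) (n+1)]
        simp only [Nat.cast_zero, zero_mul, add_zero, Nat.add_sub_cancel]
        apply Finset.sum_congr rfl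
        intro k _
        push_cast
        ring
      · -- R2
        rw [Finset.sum_range_succ]
        rw [cc_eq_zero_of_lt (by omega : n < n+1)]
        simp
      · -- R3
        rw [Finset.sum_range_succ]
        rw [cc_eq_zero_of_lt (by omega : n < n+2)]
        simp
    rw [hR]
    have hL1 : (m:ℝ) * ∑ k ∈ range (n+1), (m.choose k : ℝ) * cc n k
        = (∑ k ∈ range (n+1), (k:ℝ) * (m.choose k : ℝ) * cc n k)
          + ∑ k ∈ range (n+1), ((k:ℝ)+1) * ((m.choose (k+1) : ℕ) : ℝ) * cc n k := by
      rw [Finset.mul_sum, ← Finset.sum_add_distrib]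
      apply Finset.sum_congr rfl
      intro k _
      have := mul_choose_aux' m k
      linear_combination cc n k * this
    have hL2 : ∑ k ∈ range (n+1), (((m+1).choose k : ℕ) : ℝ) * cc n k
        = (∑ k ∈ range (n+1), (m.choose k : ℝ) * cc n k)
          + ∑ k ∈ range (n+1), (m.choose k : ℝ) * cc n (k+1) := by
      rw [Finset.sum_range_succ' (fun k => (((m+1).choose k : ℕ) : ℝ) * cc n k) n]
      rw [Finset.sum_range_succ' (fun k => (m.choose k : ℝ) * cc n k) n]
      have hlast : ∑ k ∈ range (n+1), (m.choose k : ℝ) * cc n (k+1)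
          = ∑ k ∈ range n, (m.choose k : ℝ) * cc n (k+1) := by
        rw [Finset.sum_range_succ, cc_eq_zero_of_lt (by omega : n < n+1), mul_zero, add_zero]
      rw [hlast]
      simp only [Nat.choose_zero_right, Nat.cast_one]
      have : ∀ k ∈ range n, (((m+1).choose (k+1) : ℕ) : ℝ) * cc n (k+1)
          = ((m.choose (k+1) : ℕ) : ℝ) * cc n (k+1) + (m.choose k : ℝ) * cc n (k+1) := by
        intro k _
        rw [Nat.choose_succ_succ m k]
        push_cast
        ring
      rw [Finset.sum_congr rfl this, Finset.sum_add_distrib]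
      ring
    rw [hL1, hL2]
    have hB : ∑ k ∈ range (n+1), ((k:ℝ)-1) * (m.choose k : ℝ) * cc n k
        = (∑ k ∈ range (n+1), (k:ℝ) * (m.choose k : ℝ) * cc n k)
          - ∑ k ∈ range (n+1), (m.choose k : ℝ) * cc n k := by
      rw [← Finset.sum_sub_distrib]
      apply Finset.sum_congr rfl
      intro k _
      ring
    rw [hB]
    ring

/-! ### analytic part -/

lemma summable_V (s : ℕ) : Summable (fun j : ℕ => (j.choose s : ℝ)/2^(j+1)) := by
  have h2 : ‖(1/2 : ℝ)‖ < 1 := by rw [Real.norm_eq_abs]; rw [abs_of_pos] <;> norm_num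
  have h := (summable_choose_mul_geometric_of_norm_lt_one (R := ℝ) s h2).mul_right ((1/2:ℝ)^(s+1))
  rw [← summable_nat_add_iff s]
  refine h.congr (fun j => ?_)
  symm
  rw [show j + s + 1 = j + (s+1) by ring, pow_add, one_div, inv_pow, inv_pow, div_eq_mul_inv,
    mul_inv]
  ring

lemma tsum_V (s : ℕ) : ∑' j : ℕ, (j.choose s : ℝ)/2^(j+1) = 1 := by
  have h2 : ‖(1/2 : ℝ)‖ < 1 := by rw [Real.norm_eq_abs]; rw [abs_of_pos] <;> norm_num
  have hs := summable_V s
  have key := Summable.sum_add_tsum_nat_add (f := fun j : ℕ => (j.choose s : ℝ)/2^(j+1)) s hs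
  have hz : ∑ j ∈ range s, (j.choose s : ℝ)/2^(j+1) = 0 := by
    apply Finset.sum_eq_zero
    intro j hj
    simp only [Finset.mem_range] at hj
    rw [Nat.choose_eq_zero_of_lt hj]
    simp
  rw [hz, zero_add] at key
  rw [← key]
  have hfun : (fun j : ℕ => ((j + s).choose s : ℝ)/2^(j+s+1))
      = fun j : ℕ => (((j + s).choose s : ℝ) * (1/2:ℝ)^j) * (1/2:ℝ)^(s+1) := by
    funext j
    rw [show j + s + 1 = j + (s+1) by ring, pow_add, one_div, inv_pow, inv_pow, div_eq_mul_inv,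
      mul_inv]
    ring
  rw [hfun, tsum_mul_right, tsum_choose_mul_geometric_of_norm_lt_one s h2]
  have : (1 - 1/2 : ℝ) = 1/2 := by norm_num
  rw [this]
  rw [one_div ((1/2:ℝ)^(s+1)), inv_mul_cancel₀ (by positivity)]

lemma summable_T (i k : ℕ) : Summable (fun j : ℕ => ((j+i).choose k : ℝ)/2^(j+1)) := by
  have hfun : (fun j : ℕ => ((j+i).choose k : ℝ)/2^(j+1))
      = fun j : ℕ => ∑ ab ∈ Finset.HasAntidiagonal.antidiagonal k, (i.choose ab.2 : ℝ) * ((j.choose ab.1 : ℝ)/2^(j+1)) := by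
    funext j
    rw [Nat.add_choose_eq]
    push_cast
    rw [Finset.sum_div]
    apply Finset.sum_congr rfl
    intro ab _
    ring
  rw [hfun]
  exact summable_sum (fun ab _ => (summable_V ab.1).mul_left _)

lemma hasSum_V (s : ℕ) : HasSum (fun j : ℕ => (j.choose s : ℝ)/2^(j+1)) 1 := by
  have h := (summable_V s).hasSum
  rwa [tsum_V] at h

lemma tsum_T (i k : ℕ) :
    ∑' j : ℕ, ((j+i).choose k : ℝ)/2^(j+1) = ∑ a ∈ range (k+1), (i.choose a : ℝ) := by
  have hfun : (fun j : ℕ => ((j+i).choose k : ℝ)/2^(j+1))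
      = fun j : ℕ => ∑ ab ∈ Finset.HasAntidiagonal.antidiagonal k, (i.choose ab.2 : ℝ) * ((j.choose ab.1 : ℝ)/2^(j+1)) := by
    funext j
    rw [Nat.add_choose_eq]
    push_cast
    rw [Finset.sum_div]
    apply Finset.sum_congr rfl
    intro ab _
    ring
  have H : HasSum (fun j : ℕ => ∑ ab ∈ Finset.HasAntidiagonal.antidiagonal k,
      (i.choose ab.2 : ℝ) * ((j.choose ab.1 : ℝ)/2^(j+1)))
      (∑ ab ∈ Finset.HasAntidiagonal.antidiagonal k, (i.choose ab.2 : ℝ) * 1) :=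
    hasSum_sum (fun ab _ => (hasSum_V ab.1).mul_left _)
  rw [hfun, H.tsum_eq]
  simp only [mul_one]
  rw [Finset.Nat.sum_antidiagonal_eq_sum_range_succ_mk]
  rw [← Finset.sum_range_reflect (fun a => (i.choose a : ℝ)) (k+1)]
  apply Finset.sum_congr rfl
  intro a ha
  simp only [Finset.mem_range] at ha
  congr 2
  try omega

lemma alt_choose_real (m : ℕ) :
    ∑ j ∈ range (m+1), (-1:ℝ)^j * (m.choose j : ℝ) = if m = 0 then 1 else 0 := by
  rcases Nat.eq_zero_or_pos m with hm | hm
  · subst hm; simp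
  · rw [if_neg (by omega)]
    have h := Int.alternating_sum_range_choose_of_ne (n := m) (by omega)
    have h2 := congrArg (Int.cast : ℤ → ℝ) h
    push_cast at h2
    rw [← h2]

lemma delta (r a : ℕ) :
    ∑ i ∈ range (r+1), (-1:ℝ)^(r-i) * (r.choose i : ℝ) * (i.choose a : ℝ)
    = if a = r then 1 else 0 := by
  rcases le_or_gt a r with har | har
  · have hsign : ∀ i ∈ range (r+1), (-1:ℝ)^(r-i) * (r.choose i : ℝ) * (i.choose a : ℝ)
        = ((-1:ℝ)^r * (-1:ℝ)^i) * (r.choose i : ℝ) * (i.choose a : ℝ) := by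
      intro i hi
      simp only [Finset.mem_range] at hi
      have hi' : i ≤ r := by omega
      have h1 : (-1:ℝ)^(r-i) * (-1:ℝ)^i = (-1:ℝ)^r := by
        rw [← pow_add, Nat.sub_add_cancel hi']
      have h2 : (-1:ℝ)^i * (-1:ℝ)^i = 1 := by
        rw [← mul_pow]; norm_num
      have : (-1:ℝ)^(r-i) = (-1:ℝ)^r * (-1:ℝ)^i := by
        calc (-1:ℝ)^(r-i) = (-1:ℝ)^(r-i) * ((-1:ℝ)^i * (-1:ℝ)^i) := by rw [h2, mul_one]
        _ = ((-1:ℝ)^(r-i) * (-1:ℝ)^i) * (-1:ℝ)^i := by ring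
        _ = (-1:ℝ)^r * (-1:ℝ)^i := by rw [h1]
      rw [this]
    rw [Finset.sum_congr rfl hsign]
    rw [Finset.range_eq_Ico, ← Finset.sum_Ico_consecutive _ (Nat.zero_le a) (by omega : a ≤ r+1)]
    have hz : ∑ i ∈ Finset.Ico 0 a, ((-1:ℝ)^r * (-1:ℝ)^i) * (r.choose i : ℝ) * (i.choose a : ℝ) = 0 := by
      apply Finset.sum_eq_zero
      intro i hi
      simp only [Finset.mem_Ico] at hi
      rw [Nat.choose_eq_zero_of_lt (by omega : i < a)]
      simp
    rw [hz, zero_add, Finset.sum_Ico_eq_sum_range]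
    have hra : r + 1 - a = (r - a) + 1 := by omega
    rw [hra]
    have hterm : ∀ j ∈ range ((r-a)+1),
        ((-1:ℝ)^r * (-1:ℝ)^(a+j)) * (r.choose (a+j) : ℝ) * ((a+j).choose a : ℝ)
        = ((-1:ℝ)^r * (-1:ℝ)^a * (r.choose a : ℝ)) * ((-1:ℝ)^j * ((r-a).choose j : ℝ)) := by
      intro j hj
      simp only [Finset.mem_range] at hj
      have h1 : r.choose (a+j) * (a+j).choose a = r.choose a * (r-a).choose j := by
        have := Nat.choose_mul (n := r) (k := a+j) (s := a) (by omega)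
        simpa using this
      have h1' : (r.choose (a+j) : ℝ) * ((a+j).choose a : ℝ)
          = (r.choose a : ℝ) * ((r-a).choose j : ℝ) := by
        exact_mod_cast congrArg (Nat.cast : ℕ → ℝ) h1
      rw [pow_add]
      linear_combination ((-1:ℝ)^r * (-1:ℝ)^a * (-1:ℝ)^j) * h1'
    rw [Finset.sum_congr rfl hterm, ← Finset.mul_sum, alt_choose_real]
    rcases eq_or_lt_of_le har with heq | hlt
    · subst heq
      rw [if_pos (by omega), if_pos rfl]
      rw [Nat.choose_self]
      have : (-1:ℝ)^a * (-1:ℝ)^a = 1 := by rw [← mul_pow]; norm_num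
      push_cast
      nlinarith [this]
    · rw [if_neg (by omega), if_neg (by omega)]
      ring
  · rw [if_neg (by omega)]
    apply Finset.sum_eq_zero
    intro i hi
    simp only [Finset.mem_range] at hi
    rw [Nat.choose_eq_zero_of_lt (by omega : i < a)]
    simp

lemma neg_one_pow_par {a b : ℕ} (h : a % 2 = b % 2) : (-1:ℝ)^a = (-1:ℝ)^b := by
  rcases Nat.even_or_odd a with ha | ha
  · have hb : Even b := by rw [Nat.even_iff] at *; omega
    rw [ha.neg_one_pow, hb.neg_one_pow]
  · have hb : Odd b := by rw [Nat.odd_iff] at *; omega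
    rw [ha.neg_one_pow, hb.neg_one_pow]

lemma inner_eq (n t r : ℕ) (ht : t ≤ n) :
    ∑ k ∈ range (n+1),
      (if r ≤ k then (-1:ℝ)^t * (-1:ℝ)^k * (k.factorial:ℝ) * (t.choose k : ℝ) else 0)
      = (r.factorial : ℝ) * pderang t r := by
  have hshrink : ∑ k ∈ range (n+1),
      (if r ≤ k then (-1:ℝ)^t * (-1:ℝ)^k * (k.factorial:ℝ) * (t.choose k : ℝ) else 0)
      = ∑ k ∈ range (t+1),
      (if r ≤ k then (-1:ℝ)^t * (-1:ℝ)^k * (k.factorial:ℝ) * (t.choose k : ℝ) else 0) := by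
    symm
    apply Finset.sum_subset (Finset.range_subset_range.2 (by omega))
    intro k hk1 hk2
    simp only [Finset.mem_range] at hk1 hk2
    rw [Nat.choose_eq_zero_of_lt (by omega : t < k)]
    split_ifs <;> simp
  rw [hshrink]
  rcases le_or_gt r t with hrt | hrt
  · rw [Finset.range_eq_Ico, ← Finset.sum_Ico_consecutive _ (Nat.zero_le r) (by omega : r ≤ t+1)]
    have hz : ∑ k ∈ Finset.Ico 0 r,
        (if r ≤ k then (-1:ℝ)^t * (-1:ℝ)^k * (k.factorial:ℝ) * (t.choose k : ℝ) else 0) = 0 := by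
      apply Finset.sum_eq_zero
      intro k hk
      simp only [Finset.mem_Ico] at hk
      rw [if_neg (by omega)]
    rw [hz, zero_add]
    have htrue : ∀ k ∈ Finset.Ico r (t+1),
        (if r ≤ k then (-1:ℝ)^t * (-1:ℝ)^k * (k.factorial:ℝ) * (t.choose k : ℝ) else 0)
        = (-1:ℝ)^t * (-1:ℝ)^k * (k.factorial:ℝ) * (t.choose k : ℝ) := by
      intro k hk
      simp only [Finset.mem_Ico] at hk
      rw [if_pos (by omega)]
    rw [Finset.sum_congr rfl htrue, Finset.sum_Ico_eq_sum_range,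
      show t + 1 - r = (t-r)+1 by omega]
    rw [pderang, if_pos hrt]
    have hS : (r.factorial : ℝ) * ((t.choose r : ℝ) * (((t-r).factorial : ℝ)
        * ∑ i ∈ range ((t-r)+1), (-1:ℝ)^i / (i.factorial : ℝ)))
        = (t.factorial : ℝ) * ∑ i ∈ range ((t-r)+1), (-1:ℝ)^i / (i.factorial : ℝ) := by
      have hfact : (t.choose r : ℝ) * (r.factorial:ℝ) * ((t-r).factorial:ℝ) = (t.factorial : ℝ) := by
        exact_mod_cast congrArg (Nat.cast : ℕ → ℝ)
          (Nat.choose_mul_factorial_mul_factorial hrt)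
      linear_combination (∑ i ∈ range ((t-r)+1), (-1:ℝ)^i / (i.factorial : ℝ)) * hfact
    rw [derang, hS]
    rw [Finset.mul_sum,
      ← Finset.sum_range_reflect
        (fun i => (t.factorial : ℝ) * ((-1:ℝ)^i / (i.factorial : ℝ))) ((t-r)+1)]
    apply Finset.sum_congr rfl
    intro j hj
    simp only [Finset.mem_range] at hj
    rw [show (t-r) + 1 - 1 - j = t - r - j by omega]
    have hne : ((t-r-j).factorial : ℝ) ≠ 0 := by positivity
    have h1 : (t.choose (r+j) : ℝ) * ((r+j).factorial : ℝ) * ((t-r-j).factorial : ℝ)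
        = (t.factorial : ℝ) := by
      have := Nat.choose_mul_factorial_mul_factorial (n := t) (k := r+j) (by omega)
      rw [show t - (r+j) = t - r - j by omega] at this
      exact_mod_cast congrArg (Nat.cast : ℕ → ℝ) this
    have h2 : (-1:ℝ)^t * (-1:ℝ)^(r+j) = (-1:ℝ)^(t-r-j) := by
      rw [← pow_add]
      exact neg_one_pow_par (by omega)
    rw [mul_comm ((-1:ℝ)^t) ((-1:ℝ)^(r+j))] at h2
    field_simp
    linear_combination ((-1:ℝ)^(t-r-j)) * h1 + ((t-r-j).factorial : ℝ) * ((r+j).factorial : ℝ)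
      * (t.choose (r+j) : ℝ) * h2
  · rw [pderang, if_neg (by omega), mul_zero]
    apply Finset.sum_eq_zero
    intro k hk
    simp only [Finset.mem_range] at hk
    rw [if_neg (by omega)]

lemma summable_main (n i : ℕ) : Summable fun j : ℕ => cbellR n (j+i)/2^(j+1) := by
  have hfun : (fun j : ℕ => cbellR n (j+i)/2^(j+1))
      = fun j : ℕ => ∑ k ∈ range (n+1), cc n k * (((j+i).choose k : ℝ)/2^(j+1)) := by
    funext j
    rw [cbellR_eq n (j+i), Finset.sum_div]
    apply Finset.sum_congr rfl
    intro k _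
    ring
  rw [hfun]
  exact summable_sum (fun k _ => (summable_T i k).mul_left _)

lemma main (n r : ℕ) :
    ∑ i ∈ Finset.range (r + 1), (-1 : ℝ) ^ (r - i) * (r.choose i : ℝ) *
        ∑' j : ℕ, cbellR n (j + i) / 2 ^ (j + 1) = (r.factorial : ℝ) * pdb n r := by
  have hts : ∀ i : ℕ, ∑' j : ℕ, cbellR n (j+i)/2^(j+1)
      = ∑ k ∈ range (n+1), cc n k * ∑ a ∈ range (k+1), (i.choose a : ℝ) := by
    intro i
    have hfun : (fun j : ℕ => cbellR n (j+i)/2^(j+1))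
        = fun j : ℕ => ∑ k ∈ range (n+1), cc n k * (((j+i).choose k : ℝ)/2^(j+1)) := by
      funext j
      rw [cbellR_eq n (j+i), Finset.sum_div]
      apply Finset.sum_congr rfl
      intro k _
      ring
    rw [hfun, Summable.tsum_finsetSum (fun k _ => (summable_T i k).mul_left _)]
    apply Finset.sum_congr rfl
    intro k _
    rw [tsum_mul_left, tsum_T]
  have h1 : ∀ i ∈ range (r+1),
      (-1 : ℝ) ^ (r - i) * (r.choose i : ℝ) * ∑' j : ℕ, cbellR n (j + i) / 2 ^ (j + 1)
      = ∑ k ∈ range (n+1), ∑ a ∈ range (k+1),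
          (-1 : ℝ) ^ (r - i) * (r.choose i : ℝ) * cc n k * (i.choose a : ℝ) := by
    intro i _
    rw [hts i, Finset.mul_sum (range (n+1))
      (fun k => cc n k * ∑ a ∈ range (k+1), ((i.choose a : ℕ) : ℝ))
      ((-1:ℝ)^(r-i) * ((r.choose i : ℕ) : ℝ))]
    apply Finset.sum_congr rfl
    intro k _
    rw [← mul_assoc, Finset.mul_sum]
  rw [Finset.sum_congr rfl h1, Finset.sum_comm]
  have h2 : ∀ k ∈ range (n+1),
      ∑ i ∈ range (r+1), ∑ a ∈ range (k+1),
          (-1 : ℝ) ^ (r - i) * (r.choose i : ℝ) * cc n k * (i.choose a : ℝ)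
      = cc n k * (if r ≤ k then 1 else 0) := by
    intro k _
    rw [Finset.sum_comm]
    have h3 : ∀ a ∈ range (k+1),
        ∑ i ∈ range (r+1), (-1 : ℝ) ^ (r - i) * (r.choose i : ℝ) * cc n k * (i.choose a : ℝ)
        = cc n k * (if a = r then 1 else 0) := by
      intro a _
      rw [← delta r a, Finset.mul_sum]
      apply Finset.sum_congr rfl
      intro i _
      ring
    rw [Finset.sum_congr rfl h3, ← Finset.mul_sum, Finset.sum_ite_eq' (range (k+1)) r (fun _ => (1:ℝ))]
    congr 1
    simp [Nat.lt_succ_iff]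
  rw [Finset.sum_congr rfl h2]
  have h4 : ∀ k ∈ range (n+1), cc n k * (if r ≤ k then (1:ℝ) else 0)
      = ∑ t ∈ range (n+1),
          (if r ≤ k then (-1:ℝ)^t * (-1:ℝ)^k * (k.factorial:ℝ) * (t.choose k : ℝ) else 0)
            * (stirling2 n t : ℝ) := by
    intro k _
    rcases le_or_gt r k with h | h
    · simp only [if_pos h, mul_one]
      rw [cc, D, Finset.mul_sum]
      apply Finset.sum_congr rfl
      intro t _
      ring
    · simp only [if_neg (by omega : ¬ r ≤ k), mul_zero]
      symm
      apply Finset.sum_eq_zero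
      intro t _
      simp
  rw [Finset.sum_congr rfl h4, Finset.sum_comm]
  have h5 : ∀ t ∈ range (n+1),
      ∑ k ∈ range (n+1),
          (if r ≤ k then (-1:ℝ)^t * (-1:ℝ)^k * (k.factorial:ℝ) * (t.choose k : ℝ) else 0)
            * (stirling2 n t : ℝ)
      = ((r.factorial : ℝ) * pderang t r) * (stirling2 n t : ℝ) := by
    intro t ht
    simp only [Finset.mem_range] at ht
    rw [← Finset.sum_mul, inner_eq n t r (by omega)]
  rw [Finset.sum_congr rfl h5, pdb, Finset.mul_sum]
  apply Finset.sum_congr rfl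
  intro t _
  ring

/-- For `n ≥ 1`, each series `∑_{j≥0} φ̃_{n,j+i}/2^{j+1}` converges, and
`∑_{i=0}^r (-1)^{r-i} C(r,i) ∑_{j≥0} φ̃_{n,j+i}/2^{j+1} = r! w̃_{n,r}`;
in particular `∑_{j≥0} φ̃_{n,j}/2^{j+1} = w̃_n`. -/
theorem sum_cbellR_div_two_pow_eq (n r : ℕ) (hn : 1 ≤ n) :
    (∀ i ≤ r, Summable fun j : ℕ => cbellR n (j + i) / 2 ^ (j + 1)) ∧
    (∑ i ∈ Finset.range (r + 1), (-1 : ℝ) ^ (r - i) * (r.choose i : ℝ) *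
        ∑' j : ℕ, cbellR n (j + i) / 2 ^ (j + 1) =
      (r.factorial : ℝ) * pdb n r) ∧
    (∑' j : ℕ, cbellR n j / 2 ^ (j + 1) = pdb n 0) := by
  refine ⟨fun i _ => summable_main n i, main n r, ?_⟩
  have h0 := main n 0
  simpa using h0
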